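/- For G = SL(2,3), the map γ : OG → OG sending x ∈ G to η₁(x)·x (extended O-linearly), where η₁ is a nontrivial degree-1 character, is an O-algebra automorphism of OG, and the induced permutation π on the irreducible characters defined by ηᵢ ∘ γ = η_{π(i)} equals (0,1,2)(4,6,5). -/

import Mathlib

open IsLocalRing

noncomputable section

/-- The binary tetrahedral group `SL(2,3) ≅ Q₈ ⋊ C₃`. -/
abbrev Gsl : Type := Matrix.SpecialLinearGroup (Fin 2) (ZMod 3)

/-- The character table of `SL(2,3)`. -/
def tbl (O : Type*) [CommRing O] (ω : O) : Fin 7 → Fin 7 → O :=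
  ![![1, 1, 1, 1, 1, 1, 1],
    ![1, 1, 1, ω, ω^2, ω, ω^2],
    ![1, 1, 1, ω^2, ω, ω^2, ω],
    ![3, 3, -1, 0, 0, 0, 0],
    ![2, -2, 0, -ω^2, -ω, ω^2, ω],
    ![2, -2, 0, -ω, -ω^2, ω, ω^2],
    ![2, -2, 0, -1, -1, 1, 1]]

/-- Representatives `1, z, y, t, t², tz, t²z` of the conjugacy classes of `SL(2,3)`. -/
def reps (y t : Gsl) : Fin 7 → Gsl := ![1, y^2, y, t, t^2, t * y^2, t^2 * y^2]

section VecLemmas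
variable {α : Type*} (a b c d e f g : α)
lemma v0 : ![a,b,c,d,e,f,g] (0 : Fin 7) = a := rfl
lemma v1 : ![a,b,c,d,e,f,g] (1 : Fin 7) = b := rfl
lemma v2 : ![a,b,c,d,e,f,g] (2 : Fin 7) = c := rfl
lemma v3 : ![a,b,c,d,e,f,g] (3 : Fin 7) = d := rfl
lemma v4 : ![a,b,c,d,e,f,g] (4 : Fin 7) = e := rfl
lemma v5 : ![a,b,c,d,e,f,g] (5 : Fin 7) = f := rfl
lemma v6 : ![a,b,c,d,e,f,g] (6 : Fin 7) = g := rfl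
lemma w0 (h : 0 < 7) : ![a,b,c,d,e,f,g] (⟨0,h⟩ : Fin 7) = a := rfl
lemma w1 (h : 1 < 7) : ![a,b,c,d,e,f,g] (⟨1,h⟩ : Fin 7) = b := rfl
lemma w2 (h : 2 < 7) : ![a,b,c,d,e,f,g] (⟨2,h⟩ : Fin 7) = c := rfl
lemma w3 (h : 3 < 7) : ![a,b,c,d,e,f,g] (⟨3,h⟩ : Fin 7) = d := rfl
lemma w4 (h : 4 < 7) : ![a,b,c,d,e,f,g] (⟨4,h⟩ : Fin 7) = e := rfl
lemma w5 (h : 5 < 7) : ![a,b,c,d,e,f,g] (⟨5,h⟩ : Fin 7) = f := rfl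
lemma w6 (h : 6 < 7) : ![a,b,c,d,e,f,g] (⟨6,h⟩ : Fin 7) = g := rfl
end VecLemmas

set_option maxHeartbeats 1000000 in
lemma tbl_mul {O : Type*} [CommRing O] (ω : O) (hω : ω ^ 2 + ω + 1 = 0) (i j : Fin 7) :
    tbl O ω 1 j * tbl O ω i j = tbl O ω (![1, 2, 0, 3, 6, 4, 5] i) j := by
  fin_cases i <;> fin_cases j <;>
    simp only [tbl, v0, v1, v2, v3, v4, v5, v6, w0, w1, w2, w3, w4, w5, w6] <;>
    first
      | ring1
      | linear_combination hω
      | linear_combination ω * hω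
      | linear_combination (ω - 1) * hω
      | linear_combination (1 - ω) * hω
      | linear_combination (ω ^ 2 - ω) * hω
      | linear_combination (ω - ω ^ 2) * hω
      | linear_combination (ω + 1) * hω
      | linear_combination (-ω - 1) * hω
      | linear_combination (2 * ω - 2) * hω
      | linear_combination (2 - 2 * ω) * hω
      | linear_combination (2 * ω ^ 2 - 2 * ω) * hω
      | linear_combination (2 * ω - 2 * ω ^ 2) * hω

/-- An explicit function on `SL(2,3)` with values in `ZMod 3` which is (as proved by
`Fc_mul`) a homomorphism whose kernel is `Q₈`, the set of elements of order dividing 4. -/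
def Fc (g : Gsl) : ZMod 3 :=
  if g.1^4 = 1 then 0 else if (!![1,-1;0,1] * g.1)^4 = 1 then 1 else 2

set_option maxRecDepth 100000 in
set_option maxHeartbeats 4000000 in
lemma Fc_mul : ∀ g h : Gsl, Fc (g*h) = Fc g + Fc h := by decide

lemma Fc_one : Fc 1 = 0 := by decide

theorem stmt_10 (O : Type*) [CommRing O] [IsDomain O] [IsDiscreteValuationRing O]
    [CharZero O] [IsAdicComplete (maximalIdeal O) O] (h2 : ¬ IsUnit (2 : O))
    (ω : O) (hω : ω ^ 2 + ω + 1 = 0)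
    (y t : Gsl) (hy : orderOf y = 4) (ht : orderOf t = 3)
    (η : Fin 7 → Gsl → O)
    (hclass : ∀ i (g h : Gsl), IsConj g h → η i g = η i h)
    (hval : ∀ i j, η i (reps y t j) = tbl O ω i j)
    (hfull : ∀ g : Gsl, ∃ j, IsConj (reps y t j) g) :
    (∃ Γ : MonoidAlgebra O Gsl ≃ₐ[O] MonoidAlgebra O Gsl,
      ∀ x : Gsl, Γ (MonoidAlgebra.of O Gsl x) = η 1 x • MonoidAlgebra.of O Gsl x) ∧
    (∀ i (x : Gsl), η 1 x * η i x = η (![1, 2, 0, 3, 6, 4, 5] i) x) := by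
  have hω3 : ω ^ 3 = 1 := by linear_combination (ω - 1) * hω
  -- the homomorphism ψ : Gsl → ZMod 3, normalized so that ψ t = 1
  set ψ : Gsl → ZMod 3 := fun g => Fc t * Fc g with hψ
  have ψmul : ∀ g h : Gsl, ψ (g * h) = ψ g + ψ h := by
    intro g h; simp [hψ, Fc_mul, mul_add]
  have ψ1 : ψ 1 = 0 := by simp [hψ, Fc_one]
  have ht3 : t ^ 3 = 1 := by have := pow_orderOf_eq_one t; rwa [ht] at this
  have ht4 : t ^ 4 = t := by
    have : t ^ 4 = t ^ 3 * t := by rw [← pow_succ]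
    rw [this, ht3, one_mul]
  have htne : t ≠ 1 := by
    intro h; rw [h, orderOf_one] at ht; omega
  have hFt : Fc t ≠ 0 := by
    unfold Fc
    split_ifs with h1 h2'
    · exfalso; apply htne
      have : t ^ 4 = 1 := by
        apply Subtype.ext
        rw [Matrix.SpecialLinearGroup.coe_pow, h1]; rfl
      rw [← ht4]; exact this
    · decide
    · decide
  have hψt : ψ t = 1 := by
    have key : ∀ c : ZMod 3, c ≠ 0 → c * c = 1 := by decide
    exact key _ hFt
  have hy4 : y ^ 4 = 1 := by have := pow_orderOf_eq_one y; rwa [hy] at this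
  have hψy : ψ y = 0 := by
    have hmat : (y.1) ^ 4 = 1 := by
      rw [← Matrix.SpecialLinearGroup.coe_pow, hy4]; rfl
    simp [hψ, Fc, hmat]
  -- values of ψ on the class representatives
  have hψy2 : ψ (y ^ 2) = 0 := by rw [pow_two, ψmul, hψy, add_zero]
  have hψt2 : ψ (t ^ 2) = 2 := by rw [pow_two, ψmul, hψt]; decide
  have hψ5 : ψ (t * y ^ 2) = 1 := by rw [ψmul, hψt, hψy2, add_zero]
  have hψ6 : ψ (t ^ 2 * y ^ 2) = 2 := by rw [ψmul, hψt2, hψy2, add_zero]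
  -- ψ is a class function
  have ψconj : ∀ g h : Gsl, IsConj g h → ψ g = ψ h := by
    rintro g h ⟨c, hc⟩
    have h1 : ψ (c * g) = ψ (h * c) := by rw [hc.eq]
    rw [ψmul, ψmul, add_comm (ψ h) (ψ c)] at h1
    exact add_left_cancel h1
  -- η 1 agrees with the character ω ^ (ψ ·).val
  have hη1 : ∀ g : Gsl, η 1 g = ω ^ (ψ g).val := by
    intro g
    obtain ⟨j, hj⟩ := hfull g
    rw [← hclass 1 _ _ hj, hval, ← ψconj _ _ hj]
    fin_cases j <;>
      simp only [tbl, reps, v0, v1, v2, v3, v4, v5, v6, w0, w1, w2, w3, w4, w5, w6,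
        ψ1, hψy, hψy2, hψt, hψt2, hψ5, hψ6] <;>
      norm_num [show (0 : ZMod 3).val = 0 from rfl, show (1 : ZMod 3).val = 1 from rfl,
        show (2 : ZMod 3).val = 2 from rfl]
  have hpow : ∀ a b : ZMod 3, ω ^ (a + b).val = ω ^ a.val * ω ^ b.val := by
    intro a b
    rw [← pow_add, ZMod.val_add]
    conv_rhs => rw [← Nat.div_add_mod (a.val + b.val) 3]
    rw [pow_add, pow_mul, hω3, one_pow, one_mul]
  have hη1mul : ∀ g h : Gsl, η 1 (g * h) = η 1 g * η 1 h := by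
    intro g h; rw [hη1, hη1, hη1, ψmul, hpow]
  have hη1one : η 1 1 = 1 := by rw [hη1, ψ1, ZMod.val_zero, pow_zero]
  have hη1inv : ∀ g : Gsl, η 1 g⁻¹ * η 1 g = 1 := by
    intro g; rw [← hη1mul, inv_mul_cancel, hη1one]
  constructor
  · -- the algebra automorphism
    refine ⟨AlgEquiv.ofAlgHom
      (MonoidAlgebra.lift O (MonoidAlgebra O Gsl) Gsl
        { toFun := fun x => η 1 x • MonoidAlgebra.of O Gsl x
          map_one' := by rw [hη1one, one_smul, map_one]
          map_mul' := by
            intro a b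
            rw [map_mul, hη1mul, smul_mul_smul_comm] })
      (MonoidAlgebra.lift O (MonoidAlgebra O Gsl) Gsl
        { toFun := fun x => η 1 x⁻¹ • MonoidAlgebra.of O Gsl x
          map_one' := by rw [inv_one, hη1one, one_smul, map_one]
          map_mul' := by
            intro a b
            rw [map_mul, mul_inv_rev, hη1mul, mul_comm (η 1 b⁻¹), smul_mul_smul_comm] })
      ?_ ?_, ?_⟩
    · apply MonoidAlgebra.algHom_ext
      intro x
      simp only [AlgHom.coe_comp, Function.comp_apply, MonoidAlgebra.lift_single,
        one_smul, MonoidHom.coe_mk, OneHom.coe_mk, map_smul, MonoidAlgebra.lift_of,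
        AlgHom.id_apply, smul_smul, MonoidAlgebra.of_apply, one_mul]
      first
        | rw [hη1inv, one_smul]
        | rw [mul_comm, hη1inv, one_smul]
      exact Subsingleton.elim _ _
    · apply MonoidAlgebra.algHom_ext
      intro x
      simp only [AlgHom.coe_comp, Function.comp_apply, MonoidAlgebra.lift_single,
        one_smul, MonoidHom.coe_mk, OneHom.coe_mk, map_smul, MonoidAlgebra.lift_of,
        AlgHom.id_apply, smul_smul, MonoidAlgebra.of_apply, one_mul]
      first
        | rw [hη1inv, one_smul]
        | rw [mul_comm, hη1inv, one_smul]
      exact Subsingleton.elim _ _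
    · intro x
      exact MonoidAlgebra.lift_of _ x
  · -- the permutation of the characters
    intro i x
    obtain ⟨j, hj⟩ := hfull x
    rw [← hclass 1 _ _ hj, ← hclass i _ _ hj, ← hclass _ _ _ hj, hval, hval, hval]
    exact tbl_mul ω hω i j

end
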